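/- (Corollary 3.1, approximate impulse control) Assume there exist C3 > 0 and σ ∈ (0,1) such that for all ε > 0, all t > 0 and all u0 ∈ L²(Ω), ‖S(t)u0‖² ≤ e^{C3(1 + (1/t)^{σ/(1−σ)})} e^{((C3/t) ln(e + 1/ε))^σ} ‖S(t)u0‖_ω² + ε ‖u0‖². Then for all 0 < L < T, all ε > 0 and every y_e ∈ L²(Ω), there exists f ∈ L²(Ω) such that, setting y(T) := S(T−L)( S(L) y_e + 1_ω f ), one has ‖y(T)‖² ≤ ε ‖y_e‖² and ‖1_ω f‖² ≤ e^{C3(1 + (1/(T−L))^{σ/(1−σ)})} e^{((C3/(T−L)) ln(e + 1/ε))^σ} ‖y_e‖². -/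

import Mathlib

open MeasureTheory Set Filter
open scoped RealInnerProductSpace ENNReal

noncomputable section

/-- The heat semigroup `S(t)u0 = sum_j e^{-lam_j t} <u0, Phi_j> Phi_j` on `L2(Omega)`,
given a Hilbert basis `B` of eigenfunctions and eigenvalues `lam`. -/
noncomputable def heatSG {d : ℕ} {Ω : Set (EuclideanSpace ℝ (Fin d))}
    (B : HilbertBasis ℕ ℝ (Lp ℝ 2 (volume.restrict Ω))) (lam : ℕ → ℝ)
    (t : ℝ) (u : Lp ℝ 2 (volume.restrict Ω)) : Lp ℝ 2 (volume.restrict Ω) :=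
  ∑' j, (Real.exp (-(lam j) * t) * ⟪u, B j⟫) • B j

/-- Multiplication by the indicator function `1_omega` on `L2(Omega)`. -/
noncomputable def indLp {d : ℕ} {Ω : Set (EuclideanSpace ℝ (Fin d))}
    (ω : Set (EuclideanSpace ℝ (Fin d))) (hω : MeasurableSet ω)
    (f : Lp ℝ 2 (volume.restrict Ω)) : Lp ℝ 2 (volume.restrict Ω) :=
  MemLp.toLp (ω.indicator ⇑f) ((Lp.memLp f).indicator hω)

namespace ImpulseAux

/-! ### Abstract heat semigroup on a Hilbert space -/

variable {F : Type*} [NormedAddCommGroup F] [InnerProductSpace ℝ F] [CompleteSpace F]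

lemma memℓp_two_mul (a : ℕ → ℝ) (ha : ∀ j, |a j| ≤ 1) (c : lp (fun _ : ℕ => ℝ) 2) :
    Memℓp (fun j => a j * c j) 2 := by
  have h2 : (0:ℝ) < (2 : ℝ≥0∞).toReal := by norm_num
  rw [memℓp_gen_iff h2]
  have hc : Summable fun j => ‖c j‖ ^ (2 : ℝ≥0∞).toReal :=
    (memℓp_gen_iff h2).mp (lp.memℓp c)
  refine Summable.of_nonneg_of_le (fun j => ?_) (fun j => ?_) hc
  · positivity
  · refine Real.rpow_le_rpow (norm_nonneg _) ?_ h2.le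
    rw [norm_mul]
    calc ‖a j‖ * ‖c j‖ ≤ 1 * ‖c j‖ := by
          refine mul_le_mul_of_nonneg_right ?_ (norm_nonneg _)
          simpa [Real.norm_eq_abs] using ha j
      _ = ‖c j‖ := one_mul _

variable (B : HilbertBasis ℕ ℝ F) (lam : ℕ → ℝ)

/-- Abstract version of the heat semigroup. -/
def absHeat (t : ℝ) (u : F) : F :=
  ∑' j, (Real.exp (-(lam j) * t) * ⟪u, B j⟫) • B j

lemma exp_coef_abs_le (hpos : ∀ j, 0 < lam j) {t : ℝ} (ht : 0 ≤ t) (j : ℕ) :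
    |Real.exp (-(lam j) * t)| ≤ 1 := by
  rw [abs_of_pos (Real.exp_pos _)]
  exact Real.exp_le_one_iff.2 (by nlinarith [(hpos j).le])

/-- The coefficient sequence of the heat semigroup, as an element of `ℓ²`. -/
def mulSeq (hpos : ∀ j, 0 < lam j) {t : ℝ} (ht : 0 ≤ t) (u : F) :
    lp (fun _ : ℕ => ℝ) 2 :=
  ⟨fun j => Real.exp (-(lam j) * t) * B.repr u j,
    memℓp_two_mul _ (exp_coef_abs_le lam hpos ht) (B.repr u)⟩

lemma mulSeq_apply (hpos : ∀ j, 0 < lam j) {t : ℝ} (ht : 0 ≤ t) (u : F) (j : ℕ) :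
    (mulSeq B lam hpos ht u : ∀ _ : ℕ, ℝ) j = Real.exp (-(lam j) * t) * B.repr u j := rfl

lemma absHeat_hasSum (hpos : ∀ j, 0 < lam j) {t : ℝ} (ht : 0 ≤ t) (u : F) :
    HasSum (fun j => (Real.exp (-(lam j) * t) * ⟪u, B j⟫) • B j)
      (B.repr.symm (mulSeq B lam hpos ht u)) := by
  have h := B.hasSum_repr_symm (mulSeq B lam hpos ht u)
  convert h using 2 with j
  rw [mulSeq_apply, B.repr_apply_apply, real_inner_comm]

lemma absHeat_eq (hpos : ∀ j, 0 < lam j) {t : ℝ} (ht : 0 ≤ t) (u : F) :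
    absHeat B lam t u = B.repr.symm (mulSeq B lam hpos ht u) :=
  (absHeat_hasSum B lam hpos ht u).tsum_eq

lemma repr_absHeat (hpos : ∀ j, 0 < lam j) {t : ℝ} (ht : 0 ≤ t) (u : F) (j : ℕ) :
    B.repr (absHeat B lam t u) j = Real.exp (-(lam j) * t) * B.repr u j := by
  rw [absHeat_eq B lam hpos ht, LinearIsometryEquiv.apply_symm_apply, mulSeq_apply]

lemma inner_basis_absHeat (hpos : ∀ j, 0 < lam j) {t : ℝ} (ht : 0 ≤ t) (u : F) (j : ℕ) :
    ⟪B j, absHeat B lam t u⟫ = Real.exp (-(lam j) * t) * ⟪B j, u⟫ := by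
  rw [← B.repr_apply_apply, ← B.repr_apply_apply, repr_absHeat B lam hpos ht]

lemma absHeat_add (hpos : ∀ j, 0 < lam j) {t : ℝ} (ht : 0 ≤ t) (u v : F) :
    absHeat B lam t (u + v) = absHeat B lam t u + absHeat B lam t v := by
  apply B.repr.injective
  apply lp.ext
  funext j
  rw [map_add, lp.coeFn_add, Pi.add_apply]
  rw [repr_absHeat B lam hpos ht, repr_absHeat B lam hpos ht, repr_absHeat B lam hpos ht,
    map_add, lp.coeFn_add, Pi.add_apply]
  ring

lemma absHeat_smul (hpos : ∀ j, 0 < lam j) {t : ℝ} (ht : 0 ≤ t) (c : ℝ) (u : F) :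
    absHeat B lam t (c • u) = c • absHeat B lam t u := by
  apply B.repr.injective
  apply lp.ext
  funext j
  rw [_root_.map_smul, lp.coeFn_smul, Pi.smul_apply]
  rw [repr_absHeat B lam hpos ht, repr_absHeat B lam hpos ht, _root_.map_smul, lp.coeFn_smul,
    Pi.smul_apply, smul_eq_mul, smul_eq_mul]
  ring

lemma absHeat_selfAdjoint (hpos : ∀ j, 0 < lam j) {t : ℝ} (ht : 0 ≤ t) (u v : F) :
    ⟪absHeat B lam t u, v⟫ = ⟪u, absHeat B lam t v⟫ := by
  rw [← B.repr.inner_map_map (absHeat B lam t u) v,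
    ← B.repr.inner_map_map u (absHeat B lam t v), lp.inner_eq_tsum, lp.inner_eq_tsum]
  congr 1
  funext j
  simp only [RCLike.inner_apply, conj_trivial]
  rw [repr_absHeat B lam hpos ht, repr_absHeat B lam hpos ht]
  ring

lemma absHeat_norm_le (hpos : ∀ j, 0 < lam j) {t : ℝ} (ht : 0 ≤ t) (u : F) :
    ‖absHeat B lam t u‖ ≤ ‖u‖ := by
  have h0 : ‖absHeat B lam t u‖ = ‖B.repr (absHeat B lam t u)‖ := (B.repr.norm_map _).symm
  have h0' : ‖u‖ = ‖B.repr u‖ := (B.repr.norm_map _).symm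
  have h1 : (⟪B.repr (absHeat B lam t u), B.repr (absHeat B lam t u)⟫ : ℝ)
      ≤ ⟪B.repr u, B.repr u⟫ := by
    rw [lp.inner_eq_tsum, lp.inner_eq_tsum]
    refine Summable.tsum_le_tsum (fun j => ?_) (lp.hasSum_inner _ _).summable
      (lp.hasSum_inner _ _).summable
    simp only [RCLike.inner_apply, conj_trivial]
    rw [repr_absHeat B lam hpos ht]
    have he := exp_coef_abs_le lam hpos ht j
    have he' := Real.exp_pos (-(lam j) * t)
    rw [abs_of_pos he'] at he
    nlinarith [sq_nonneg ((B.repr u) j : ℝ),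
      mul_nonneg (mul_nonneg (sub_nonneg.2 he) (by linarith : (0:ℝ) ≤ 1 + Real.exp (-(lam j) * t)))
        (sq_nonneg ((B.repr u) j : ℝ))]
  rw [real_inner_self_eq_norm_sq, real_inner_self_eq_norm_sq] at h1
  rw [h0, h0']
  nlinarith [norm_nonneg (B.repr (absHeat B lam t u)), norm_nonneg (B.repr u)]

/-- The heat semigroup as a continuous linear map. -/
def absHeatCLM (hpos : ∀ j, 0 < lam j) {t : ℝ} (ht : 0 ≤ t) : F →L[ℝ] F :=
  LinearMap.mkContinuous
    { toFun := absHeat B lam t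
      map_add' := absHeat_add B lam hpos ht
      map_smul' := absHeat_smul B lam hpos ht } 1
    (fun u => by simpa using absHeat_norm_le B lam hpos ht u)

@[simp] lemma absHeatCLM_apply (hpos : ∀ j, 0 < lam j) {t : ℝ} (ht : 0 ≤ t) (u : F) :
    absHeatCLM B lam hpos ht u = absHeat B lam t u := rfl

/-- Solvability of coercive operator equations (Lax-Milgram). -/
lemma exists_solution (Top : F →L[ℝ] F) {ε : ℝ} (hε : 0 < ε)
    (hco : ∀ u, ε * ‖u‖ * ‖u‖ ≤ ⟪Top u, u⟫) (b : F) : ∃ φ, Top φ = b := by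
  set Bf : F →L[ℝ] F →L[ℝ] ℝ :=
    LinearMap.mkContinuous₂
      (LinearMap.mk₂ ℝ (fun u v => ⟪Top u, v⟫)
        (fun u u' v => by beta_reduce; rw [_root_.map_add, inner_add_left])
        (fun c u v => by beta_reduce; rw [_root_.map_smul, real_inner_smul_left, smul_eq_mul])
        (fun u v v' => by beta_reduce; rw [inner_add_right])
        (fun c u v => by beta_reduce; rw [real_inner_smul_right, smul_eq_mul]))
      ‖Top‖
      (fun u v => by
        refine (abs_real_inner_le_norm _ _).trans ?_
        have h0 := Top.le_opNorm u
        have h1 : (0:ℝ) ≤ ‖v‖ := norm_nonneg _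
        nlinarith [norm_nonneg (Top u), norm_nonneg u, Top.opNorm_nonneg]) with hBfdef
  have hBf : ∀ u v, Bf u v = ⟪Top u, v⟫ := fun _ _ => rfl
  have hcoercive : IsCoercive Bf := ⟨ε, hε, fun u => by rw [hBf]; exact hco u⟩
  refine ⟨hcoercive.continuousLinearEquivOfBilin.symm b, ?_⟩
  have h2 : ∀ w, ⟪b, w⟫ =
      ⟪Top (hcoercive.continuousLinearEquivOfBilin.symm b), w⟫ := by
    intro w
    rw [← hBf, ← hcoercive.continuousLinearEquivOfBilin_apply
      (hcoercive.continuousLinearEquivOfBilin.symm b) w,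
      hcoercive.continuousLinearEquivOfBilin.apply_symm_apply]
  exact (ext_inner_right ℝ fun w => (h2 w).symm)

/-- The abstract control construction: given a self-adjoint operator `A`, a self-adjoint
idempotent `P`, and an observability inequality, we construct an approximate control. -/
lemma abstract_control (A P : F →L[ℝ] F)
    (hA : ∀ u v, ⟪A u, v⟫ = ⟪u, A v⟫)
    (hP : ∀ u v, ⟪P u, v⟫ = ⟪u, P v⟫)
    (hPP : ∀ u, P (P u) = P u)
    {K ε : ℝ} (hK : 0 < K) (hε : 0 < ε)
    (hobs : ∀ u, ‖A u‖ ^ 2 ≤ K * ‖P (A u)‖ ^ 2 + ε * ‖u‖ ^ 2) (z : F) :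
    ∃ φ, A (z + (-K) • P (A φ)) = ε • φ ∧
      K * ‖P (A φ)‖ ^ 2 + ε * ‖φ‖ ^ 2 ≤ ‖z‖ ^ 2 := by
  set Top : F →L[ℝ] F := K • (A ∘L (P ∘L A)) + ε • ContinuousLinearMap.id ℝ F with hTopdef
  have hTop_apply : ∀ u, Top u = K • (A (P (A u))) + ε • u := by
    intro u; rw [hTopdef]; simp
  have hAPA : ∀ u v, ⟪A (P (A u)), v⟫ = ⟪P (A u), P (A v)⟫ := by
    intro u v
    calc ⟪A (P (A u)), v⟫ = ⟪P (A u), A v⟫ := hA _ _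
      _ = ⟪P (P (A u)), A v⟫ := by rw [hPP]
      _ = ⟪P (A u), P (A v)⟫ := hP _ _
  have hco : ∀ u, ε * ‖u‖ * ‖u‖ ≤ ⟪Top u, u⟫ := by
    intro u
    rw [hTop_apply, inner_add_left, real_inner_smul_left, real_inner_smul_left, hAPA]
    have h1 : (⟪P (A u), P (A u)⟫ : ℝ) = ‖P (A u)‖ ^ 2 := real_inner_self_eq_norm_sq _
    have h1' : (⟪u, u⟫ : ℝ) = ‖u‖ ^ 2 := real_inner_self_eq_norm_sq _
    rw [h1, h1']
    nlinarith [sq_nonneg ‖P (A u)‖, hK.le]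
  obtain ⟨φ, hφ⟩ := exists_solution Top hε hco (A z)
  have hEq : K • A (P (A φ)) + ε • φ = A z := by rw [← hTop_apply, hφ]
  refine ⟨φ, ?_, ?_⟩
  · rw [_root_.map_add, _root_.map_smul, ← hEq]
    module
  · have h2 : ⟪A z, φ⟫ = K * ⟪A (P (A φ)), φ⟫ + ε * ⟪φ, φ⟫ := by
      rw [← hEq, inner_add_left, real_inner_smul_left, real_inner_smul_left]
    rw [hAPA, real_inner_self_eq_norm_sq, real_inner_self_eq_norm_sq] at h2
    have h3 : ⟪A z, φ⟫ = ⟪z, A φ⟫ := hA z φ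
    have h4 : (⟪z, A φ⟫ : ℝ) ≤ ‖z‖ * ‖A φ‖ := real_inner_le_norm _ _
    have h5 := hobs φ
    set S := K * ‖P (A φ)‖ ^ 2 + ε * ‖φ‖ ^ 2 with hSdef
    have hSn : 0 ≤ S := by positivity
    have hS1 : S ≤ ‖z‖ * ‖A φ‖ := by rw [← h2, h3]; exact h4
    rcases eq_or_lt_of_le hSn with h0 | h0
    · rw [← h0]; positivity
    · have h6 : S * S ≤ ‖z‖ ^ 2 * S := by
        calc S * S ≤ (‖z‖ * ‖A φ‖) * (‖z‖ * ‖A φ‖) :=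
              mul_le_mul hS1 hS1 hSn (by positivity)
          _ = ‖z‖ ^ 2 * ‖A φ‖ ^ 2 := by ring
          _ ≤ ‖z‖ ^ 2 * S := by nlinarith [sq_nonneg ‖z‖]
      exact le_of_mul_le_mul_right (by linarith) h0

/-! ### Properties of `indLp` -/

variable {d : ℕ} {Ω : Set (EuclideanSpace ℝ (Fin d))}
variable (ω : Set (EuclideanSpace ℝ (Fin d))) (hωm : MeasurableSet ω)

lemma indLp_coeFn (f : Lp ℝ 2 (volume.restrict Ω)) :
    ⇑(indLp (Ω := Ω) ω hωm f) =ᵐ[volume.restrict Ω] ω.indicator ⇑f :=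
  MemLp.coeFn_toLp _

lemma indLp_add (f g : Lp ℝ 2 (volume.restrict Ω)) :
    indLp (Ω := Ω) ω hωm (f + g) = indLp ω hωm f + indLp ω hωm g := by
  apply Lp.ext
  refine (indLp_coeFn ω hωm (f + g)).trans ?_
  refine EventuallyEq.trans ?_ (Lp.coeFn_add (indLp ω hωm f) (indLp ω hωm g)).symm
  have h1 := (indLp_coeFn ω hωm f).symm
  have h2 := (indLp_coeFn ω hωm g).symm
  have h3 : ⇑(f + g) =ᵐ[volume.restrict Ω] ⇑f + ⇑g := Lp.coeFn_add f g
  filter_upwards [h1, h2, h3.indicator (s := ω)] with x hx1 hx2 hx3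
  rw [hx3, Pi.add_apply, ← hx1, ← hx2]
  by_cases hx : x ∈ ω
  · simp [Set.indicator_of_mem hx]
  · simp [Set.indicator_of_notMem hx]

lemma indLp_smul (c : ℝ) (f : Lp ℝ 2 (volume.restrict Ω)) :
    indLp (Ω := Ω) ω hωm (c • f) = c • indLp ω hωm f := by
  apply Lp.ext
  refine (indLp_coeFn ω hωm (c • f)).trans ?_
  refine EventuallyEq.trans ?_ (Lp.coeFn_smul c (indLp ω hωm f)).symm
  have h1 := (indLp_coeFn ω hωm f).symm
  have h3 : ⇑(c • f) =ᵐ[volume.restrict Ω] c • ⇑f := Lp.coeFn_smul c f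
  filter_upwards [h1, h3.indicator (s := ω)] with x hx1 hx3
  rw [hx3, Pi.smul_apply, ← hx1]
  by_cases hx : x ∈ ω
  · simp [Set.indicator_of_mem hx]
  · simp [Set.indicator_of_notMem hx]

lemma indLp_idem (f : Lp ℝ 2 (volume.restrict Ω)) :
    indLp (Ω := Ω) ω hωm (indLp ω hωm f) = indLp ω hωm f := by
  apply Lp.ext
  refine (indLp_coeFn ω hωm (indLp ω hωm f)).trans ?_
  refine EventuallyEq.trans ?_ (indLp_coeFn ω hωm f).symm
  have h1 := (indLp_coeFn ω hωm f).indicator (s := ω)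
  filter_upwards [h1] with x hx1
  rw [hx1, Set.indicator_indicator, Set.inter_self]

lemma indLp_selfAdjoint (f g : Lp ℝ 2 (volume.restrict Ω)) :
    ⟪indLp (Ω := Ω) ω hωm f, g⟫ = ⟪f, indLp ω hωm g⟫ := by
  rw [L2.inner_def, L2.inner_def]
  refine integral_congr_ae ?_
  have h1 := indLp_coeFn ω hωm f
  have h2 := indLp_coeFn ω hωm g
  filter_upwards [h1, h2] with x hx1 hx2
  rw [hx1, hx2]
  simp only [RCLike.inner_apply, conj_trivial]
  by_cases hx : x ∈ ω
  · rw [Set.indicator_of_mem hx, Set.indicator_of_mem hx]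
  · rw [Set.indicator_of_notMem hx, Set.indicator_of_notMem hx, zero_mul, mul_zero]

lemma indLp_norm_le (f : Lp ℝ 2 (volume.restrict Ω)) :
    ‖indLp (Ω := Ω) ω hωm f‖ ≤ ‖f‖ := by
  have h1 : ⟪indLp (Ω := Ω) ω hωm f, indLp ω hωm f⟫ = ⟪f, indLp ω hωm f⟫ := by
    rw [indLp_selfAdjoint, indLp_idem]
  have h2 : (⟪f, indLp (Ω := Ω) ω hωm f⟫ : ℝ) ≤ ‖f‖ * ‖indLp ω hωm f‖ := real_inner_le_norm _ _
  have h3 : ‖indLp (Ω := Ω) ω hωm f‖ ^ 2 ≤ ‖f‖ * ‖indLp ω hωm f‖ := by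
    rw [← real_inner_self_eq_norm_sq, h1]; exact h2
  by_cases h0 : ‖indLp (Ω := Ω) ω hωm f‖ = 0
  · rw [h0]; exact norm_nonneg f
  · have h0' : 0 < ‖indLp (Ω := Ω) ω hωm f‖ := lt_of_le_of_ne (norm_nonneg _) (Ne.symm h0)
    nlinarith

/-- Multiplication by an indicator as a continuous linear map. -/
def indCLM : Lp ℝ 2 (volume.restrict Ω) →L[ℝ] Lp ℝ 2 (volume.restrict Ω) :=
  LinearMap.mkContinuous
    { toFun := indLp (Ω := Ω) ω hωm
      map_add' := indLp_add ω hωm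
      map_smul' := indLp_smul ω hωm } 1
    (fun u => by simpa using indLp_norm_le ω hωm u)

@[simp] lemma indCLM_apply (f : Lp ℝ 2 (volume.restrict Ω)) :
    indCLM (Ω := Ω) ω hωm f = indLp ω hωm f := rfl

end ImpulseAux

open ImpulseAux

set_option maxHeartbeats 1600000 in
/-- Corollary 3.1, approximate impulse control. -/
theorem approximate_impulse_control
    (d : ℕ) (hd : 1 ≤ d) (Ω ω : Set (EuclideanSpace ℝ (Fin d)))
    (hΩo : IsOpen Ω) (hΩb : Bornology.IsBounded Ω) (hΩc : IsConnected Ω)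
    (hωo : IsOpen ω) (hωne : ω.Nonempty) (hωΩ : ω ⊆ Ω) (hωm : MeasurableSet ω)
    (B : HilbertBasis ℕ ℝ (Lp ℝ 2 (volume.restrict Ω)))
    (lam : ℕ → ℝ) (hpos : ∀ j, 0 < lam j) (hmono : Monotone lam)
    (hlim : Tendsto lam atTop atTop)
    (σ C3 : ℝ) (hσ : σ ∈ Ioo (0:ℝ) 1) (hC3 : 0 < C3)
    -- the observation estimate (iii)
    (hiii : ∀ ε > 0, ∀ t > 0, ∀ u0 : Lp ℝ 2 (volume.restrict Ω),
      ‖heatSG B lam t u0‖ ^ 2 ≤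
        Real.exp (C3 * (1 + (1 / t) ^ (σ / (1 - σ)))) *
          Real.exp ((C3 / t * Real.log (Real.exp 1 + 1 / ε)) ^ σ) *
            ‖indLp ω hωm (heatSG B lam t u0)‖ ^ 2
        + ε * ‖u0‖ ^ 2) :
    ∀ L T : ℝ, 0 < L → L < T → ∀ ε > 0, ∀ ye : Lp ℝ 2 (volume.restrict Ω),
      ∃ f : Lp ℝ 2 (volume.restrict Ω),
        ‖heatSG B lam (T - L) (heatSG B lam L ye + indLp ω hωm f)‖ ^ 2 ≤ ε * ‖ye‖ ^ 2 ∧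
        ‖indLp ω hωm f‖ ^ 2 ≤
          Real.exp (C3 * (1 + (1 / (T - L)) ^ (σ / (1 - σ)))) *
            Real.exp ((C3 / (T - L) * Real.log (Real.exp 1 + 1 / ε)) ^ σ) * ‖ye‖ ^ 2 := by
  have habs : ∀ (t : ℝ) (u : Lp ℝ 2 (volume.restrict Ω)),
      heatSG B lam t u = absHeat B lam t u := fun _ _ => rfl
  intro L T hL hLT ε hε ye
  set t := T - L with htdef
  have htpos : 0 < t := by rw [htdef]; linarith
  set K := Real.exp (C3 * (1 + (1 / t) ^ (σ / (1 - σ)))) *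
      Real.exp ((C3 / t * Real.log (Real.exp 1 + 1 / ε)) ^ σ) with hKdef
  have hK0 : 0 < K := by positivity
  set A := absHeatCLM B lam hpos htpos.le with hAdef
  set P := indCLM (Ω := Ω) ω hωm with hPdef
  set z := heatSG B lam L ye with hzdef
  have hA : ∀ u v, ⟪A u, v⟫ = ⟪u, A v⟫ := fun u v =>
    absHeat_selfAdjoint B lam hpos htpos.le u v
  have hP : ∀ u v, ⟪P u, v⟫ = ⟪u, P v⟫ := fun u v => indLp_selfAdjoint ω hωm u v
  have hPP : ∀ u, P (P u) = P u := fun u => indLp_idem ω hωm u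
  have hobs : ∀ u, ‖A u‖ ^ 2 ≤ K * ‖P (A u)‖ ^ 2 + ε * ‖u‖ ^ 2 := by
    intro u
    have h := hiii ε hε t htpos u
    rw [habs] at h
    exact h
  obtain ⟨φ, hyT, hS⟩ := abstract_control A P hA hP hPP hK0 hε hobs z
  set f := (-K) • (P (A φ)) with hfdef
  have hPf : indLp ω hωm f = f := by
    have h0 : indLp ω hωm f = P f := rfl
    have h1 : P (P (A φ)) = P (A φ) := hPP (A φ)
    rw [h0, hfdef, _root_.map_smul, h1]
  have hzye : ‖z‖ ≤ ‖ye‖ := by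
    rw [hzdef, habs]
    exact absHeat_norm_le B lam hpos hL.le ye
  have hSn0 : 0 ≤ K * ‖P (A φ)‖ ^ 2 + ε * ‖φ‖ ^ 2 := by positivity
  have hzye2 : ‖z‖ ^ 2 ≤ ‖ye‖ ^ 2 := by nlinarith [norm_nonneg z, norm_nonneg ye]
  refine ⟨f, ?_, ?_⟩
  · rw [hPf]
    have hgoal : heatSG B lam t (z + f) = A (z + f) := habs t (z + f)
    rw [hgoal, hfdef, hyT, norm_smul]
    have h8 : (‖ε‖ * ‖φ‖) ^ 2 = ε ^ 2 * ‖φ‖ ^ 2 := by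
      rw [mul_pow, Real.norm_eq_abs, sq_abs]
    rw [h8]
    have h9 : ε * ‖φ‖ ^ 2 ≤ ‖ye‖ ^ 2 := by
      nlinarith [mul_nonneg hK0.le (sq_nonneg ‖P (A φ)‖)]
    calc ε ^ 2 * ‖φ‖ ^ 2 = ε * (ε * ‖φ‖ ^ 2) := by ring
      _ ≤ ε * ‖ye‖ ^ 2 := mul_le_mul_of_nonneg_left h9 hε.le
  · rw [hPf, hfdef, norm_smul]
    have h8 : (‖(-K : ℝ)‖ * ‖P (A φ)‖) ^ 2 = K ^ 2 * ‖P (A φ)‖ ^ 2 := by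
      rw [mul_pow, Real.norm_eq_abs, abs_neg, abs_of_pos hK0]
    rw [h8]
    have h9 : K * ‖P (A φ)‖ ^ 2 ≤ ‖ye‖ ^ 2 := by
      nlinarith [mul_nonneg hε.le (sq_nonneg ‖φ‖)]
    calc K ^ 2 * ‖P (A φ)‖ ^ 2 = K * (K * ‖P (A φ)‖ ^ 2) := by ring
      _ ≤ K * ‖ye‖ ^ 2 := mul_le_mul_of_nonneg_left h9 hK0.le
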